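/- arXiv:1611.00743 — 4 statements merged into one kernel-verified Lean document; each statement's English description precedes it below -/
import Mathlib

section
/- Let λ ∈ (0, 1/2), let ε > 0 and let r > 0. Then |φ_ε(r) − φ_0(r)| ≤ (λ / ((1 − 2λ) √c_λ)) · ε^{1−2λ} / r. -/
open Real

lemma key_aux (lam A : ℝ) (h0 : 0 < lam) (h2 : lam < 1/2) (hA : 0 < A)
    (ε : ℝ) (hε : 0 < ε) :
    A ^ (-lam) - (ε ^ 2 + A) ^ (-lam)
      ≤ lam / ((1 - 2 * lam) * Real.sqrt A) * ε ^ (1 - 2 * lam) := by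
  have h12 : 0 < 1 - 2 * lam := by linarith
  have hsA : 0 < Real.sqrt A := Real.sqrt_pos.mpr hA
  set K := lam / ((1 - 2 * lam) * Real.sqrt A) with hK
  have hKpos : 0 < K := div_pos h0 (mul_pos h12 hsA)
  set F : ℝ → ℝ := fun t => K * t ^ (1 - 2 * lam) - (A ^ (-lam) - (t ^ 2 + A) ^ (-lam)) with hF
  have hF0 : F 0 = 0 := by
    simp [hF, Real.zero_rpow (ne_of_gt h12)]
  have key : F 0 ≤ F ε := by
    have hderiv : ∀ t ∈ Set.Ioo (0:ℝ) ε, HasDerivAt F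
        (K * ((1 - 2 * lam) * t ^ (1 - 2 * lam - 1)) + (-lam) * (t ^ 2 + A) ^ (-lam - 1) * (2 * t)) t := by
      intro t ht
      have htpos : 0 < t := ht.1
      have h1 : HasDerivAt (fun t : ℝ => K * t ^ (1 - 2 * lam))
          (K * ((1 - 2 * lam) * t ^ (1 - 2 * lam - 1))) t :=
        (Real.hasDerivAt_rpow_const (Or.inl htpos.ne')).const_mul K
      have h2' : HasDerivAt (fun t : ℝ => (t ^ 2 + A) ^ (-lam))
          ((-lam) * (t ^ 2 + A) ^ (-lam - 1) * (2 * t)) t := by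
        have hb : HasDerivAt (fun t : ℝ => t ^ 2 + A) (2 * t) t := by
          simpa using ((hasDerivAt_pow 2 t).add_const A)
        have := (hb.rpow_const (p := -lam) (Or.inl (by positivity)))
        convert this using 1; ring
      have := h1.sub ((hasDerivAt_const t (A ^ (-lam))).sub h2')
      exact this.congr_deriv (by ring)
    have hcont : ContinuousOn F (Set.Icc 0 ε) := by
      apply ContinuousOn.sub
      · exact (continuousOn_id.rpow_const (fun x _ => Or.inr h12.le)).const_smul K
      · apply ContinuousOn.sub continuousOn_const
        apply ContinuousOn.rpow_const
        · exact (continuousOn_pow 2).add continuousOn_const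
        · intro x _; left; positivity
    have hmono : MonotoneOn F (Set.Icc 0 ε) := by
      apply monotoneOn_of_deriv_nonneg (convex_Icc 0 ε) hcont
      · intro t ht
        rw [interior_Icc] at ht
        exact (hderiv t ht).differentiableAt.differentiableWithinAt
      · intro t ht
        rw [interior_Icc] at ht
        rw [(hderiv t ht).deriv]
        have htpos : 0 < t := ht.1
        -- need : K * ((1-2λ) t^{-2λ}) ≥ 2λ t (t²+A)^{λ+1}⁻¹-form
        have hKm : K * (1 - 2 * lam) = lam / Real.sqrt A := by
          rw [hK]; field_simp; exact div_self (by linarith)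
        have hAM : 2 * t * Real.sqrt A ≤ t ^ 2 + A := by
          nlinarith [sq_nonneg (t - Real.sqrt A), Real.sq_sqrt hA.le]
        have hpow : t ^ (2 * lam) * (2 * t * Real.sqrt A) ≤ (t ^ 2 + A) ^ (lam + 1) := by
          have h1 : t ^ (2 * lam) ≤ (t ^ 2 + A) ^ lam := by
            have : t ^ (2 * lam) = (t ^ 2) ^ lam := by
              rw [← Real.rpow_natCast t 2, ← Real.rpow_mul htpos.le]
              norm_num
            rw [this]
            exact Real.rpow_le_rpow (by positivity) (by linarith) h0.le
          calc t ^ (2 * lam) * (2 * t * Real.sqrt A)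
              ≤ (t ^ 2 + A) ^ lam * (t ^ 2 + A) := by
                apply mul_le_mul h1 hAM (by positivity) (by positivity)
            _ = (t ^ 2 + A) ^ (lam + 1) := by
                rw [Real.rpow_add (by positivity), Real.rpow_one]
        -- goal: 0 ≤ K * ((1-2λ) * t^{1-2λ-1}) + (-λ)(t²+A)^{-λ-1}(2t)
        have hexp : (1 : ℝ) - 2 * lam - 1 = -(2 * lam) := by ring
        rw [hexp, ← mul_assoc, hKm]
        have hbA : (0:ℝ) < t ^ 2 + A := by positivity
        have hrw : (t ^ 2 + A) ^ (-lam - 1) = ((t ^ 2 + A) ^ (lam + 1))⁻¹ := by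
          rw [← Real.rpow_neg hbA.le]; ring_nf
        have hrw2 : t ^ (-(2 * lam)) = (t ^ (2 * lam))⁻¹ := by
          rw [← Real.rpow_neg htpos.le]
        rw [hrw, hrw2]
        have ht2l : 0 < t ^ (2 * lam) := Real.rpow_pos_of_pos htpos _
        have hpl : 0 < (t ^ 2 + A) ^ (lam + 1) := Real.rpow_pos_of_pos hbA _
        have h5 : ((t ^ 2 + A) ^ (lam + 1))⁻¹ ≤ (t ^ (2 * lam) * (2 * t * Real.sqrt A))⁻¹ :=
          inv_anti₀ (by positivity) hpow
        have h6 : lam * ((t ^ 2 + A) ^ (lam + 1))⁻¹ * (2 * t)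
            ≤ lam / Real.sqrt A * (t ^ (2 * lam))⁻¹ := by
          calc lam * ((t ^ 2 + A) ^ (lam + 1))⁻¹ * (2 * t)
              ≤ lam * (t ^ (2 * lam) * (2 * t * Real.sqrt A))⁻¹ * (2 * t) := by
                apply mul_le_mul_of_nonneg_right _ (by positivity)
                exact mul_le_mul_of_nonneg_left h5 h0.le
            _ = lam / Real.sqrt A * (t ^ (2 * lam))⁻¹ := by
                field_simp
        nlinarith [h6]
    exact hmono (Set.left_mem_Icc.mpr hε.le) (Set.mem_Icc.mpr ⟨hε.le, le_refl ε⟩) hε.le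
  rw [hF0] at key
  have := key
  simp only [hF] at this
  linarith


/-- Lemma 3.1, part (3): for `λ ∈ (0, 1/2)`, `ε > 0`, `r > 0`,
`|φ_ε(r) − φ_0(r)| ≤ (λ / ((1 − 2λ) √c_λ)) ε^{1-2λ} / r`, where
`φ_ε(r) = (ε² + c_λ r²)^{-λ}`, `φ_0(r) = c_λ^{-λ} r^{-2λ}` and `c_λ = 2^{1/λ} - 1`. -/
theorem stmt_1 (lam : ℝ) (hlam : lam ∈ Set.Ioo (0 : ℝ) (1 / 2))
    (ε r : ℝ) (hε : 0 < ε) (hr : 0 < r) :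
    |(ε ^ 2 + ((2 : ℝ) ^ (1 / lam) - 1) * r ^ 2) ^ (-lam)
        - ((2 : ℝ) ^ (1 / lam) - 1) ^ (-lam) * r ^ (-(2 * lam))|
      ≤ lam / ((1 - 2 * lam) * Real.sqrt ((2 : ℝ) ^ (1 / lam) - 1))
          * ε ^ (1 - 2 * lam) / r := by
  obtain ⟨h0, h2⟩ := hlam
  set c : ℝ := (2 : ℝ) ^ (1 / lam) - 1 with hcdef
  have hc : 0 < c := by
    have h1 : (1 : ℝ) < (2 : ℝ) ^ (1 / lam) := by
      rw [show (1 : ℝ) = (2 : ℝ) ^ (0 : ℝ) by norm_num]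
      exact Real.rpow_lt_rpow_left_iff (by norm_num) |>.mpr (by positivity)
    simp only [hcdef]
    linarith
  have hA : 0 < c * r ^ 2 := by positivity
  -- rewrite φ₀
  have hphi0 : c ^ (-lam) * r ^ (-(2 * lam)) = (c * r ^ 2) ^ (-lam) := by
    rw [Real.mul_rpow hc.le (by positivity)]
    congr 1
    rw [← Real.rpow_natCast r 2, ← Real.rpow_mul hr.le]
    ring_nf
  -- difference is nonpositive
  have hle : (ε ^ 2 + c * r ^ 2) ^ (-lam) ≤ (c * r ^ 2) ^ (-lam) :=
    Real.rpow_le_rpow_of_nonpos hA (by nlinarith) (by linarith)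
  rw [← hphi0] at hle
  rw [abs_of_nonpos (by linarith), neg_sub, hphi0]
  have hkey := key_aux lam (c * r ^ 2) h0 h2 hA ε hε
  have hsqrt : Real.sqrt (c * r ^ 2) = Real.sqrt c * r := by
    rw [Real.sqrt_mul hc.le, Real.sqrt_sq hr.le]
  rw [hsqrt] at hkey
  have heq : lam / ((1 - 2 * lam) * (Real.sqrt c * r)) * ε ^ (1 - 2 * lam)
      = lam / ((1 - 2 * lam) * Real.sqrt c) * ε ^ (1 - 2 * lam) / r := by
    have h12 : (0:ℝ) < 1 - 2 * lam := by linarith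
    have hsc : 0 < Real.sqrt c := Real.sqrt_pos.mpr hc
    field_simp
  rw [heq] at hkey
  have hadd : (ε ^ 2 + c * r ^ 2) ^ (-lam) = (ε ^ 2 + c * r ^ 2) ^ (-lam) := rfl
  linarith [hkey]
end

section
/- Let N ≥ 1 and let (μ_n) be a sequence of finite signed Borel measures on ℝ^N converging weakly-star to a finite signed Borel measure μ, i.e. ∫ f dμ_n → ∫ f dμ for every continuous f : ℝ^N → ℝ vanishing at infinity. Let C ⊆ ℝ^N be a closed set and for R > 0 let Ω_R = {x ∈ ℝ^N : dist(x, C) < R}. Assume the measures do not concentrate near C, in the sense that for every δ > 0 there exists R > 0 with limsup_{n→∞} |μ_n|(Ω_R) ≤ δ, where |μ_n| is the total variation measure of μ_n. Then ∫ φ dμ_n → ∫ φ dμ for every bounded Borel measurable φ : ℝ^N → ℝ that vanishes at infinity (for every δ > 0 there is a compact set K with |φ(x)| ≤ δ for all x ∉ K) and whose set of discontinuity points is contained in C. -/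
open MeasureTheory Filter

/-- The integral of a real function against a finite signed Borel measure,
via the Jordan decomposition. -/
noncomputable def signedIntegral {α : Type*} [MeasurableSpace α]
    (μ : MeasureTheory.SignedMeasure α) (f : α → ℝ) : ℝ :=
  (∫ x, f x ∂μ.toJordanDecomposition.posPart)
    - ∫ x, f x ∂μ.toJordanDecomposition.negPart

section Helpers

open Metric Set

variable {α : Type*} [MeasurableSpace α]

lemma integrable_of_bdd {p : Measure α} [IsFiniteMeasure p] {f : α → ℝ}
    (hf : AEStronglyMeasurable f p) {M : ℝ} (h : ∀ x, |f x| ≤ M) : Integrable f p :=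
  ⟨hf, HasFiniteIntegral.of_bounded (C := M) (Filter.Eventually.of_forall h)⟩

/-- bound on the integral of a function supported in `S`. -/
lemma abs_integral_le_of_support {p : Measure α} [IsFiniteMeasure p] {f : α → ℝ}
    (hf : AEStronglyMeasurable f p) {M : ℝ} (hb : ∀ x, |f x| ≤ M)
    {S : Set α} (hsupp : ∀ x ∉ S, f x = 0) :
    |∫ x, f x ∂p| ≤ M * (p S).toReal := by
  rw [← setIntegral_eq_integral_of_forall_compl_eq_zero hsupp, ← Real.norm_eq_abs]
  exact norm_setIntegral_le_of_norm_le_const (f := f) (measure_lt_top p S)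
    (fun x _ => hb x)

lemma totalVariation_toReal (ν : SignedMeasure α) (S : Set α) :
    (ν.totalVariation S).toReal
      = (ν.toJordanDecomposition.posPart S).toReal
        + (ν.toJordanDecomposition.negPart S).toReal := by
  rw [SignedMeasure.totalVariation, Measure.add_apply,
    ENNReal.toReal_add (measure_ne_top _ _) (measure_ne_top _ _)]

/-- signed measure version of the support bound. -/
lemma abs_signedIntegral_le_of_support (ν : SignedMeasure α) {f : α → ℝ}
    (hf : Measurable f) {M : ℝ} (hb : ∀ x, |f x| ≤ M)
    {S : Set α} (hsupp : ∀ x ∉ S, f x = 0) :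
    |signedIntegral ν f| ≤ M * (ν.totalVariation S).toReal := by
  have h1 := abs_integral_le_of_support (p := ν.toJordanDecomposition.posPart)
    hf.aestronglyMeasurable hb hsupp
  have h2 := abs_integral_le_of_support (p := ν.toJordanDecomposition.negPart)
    hf.aestronglyMeasurable hb hsupp
  rw [totalVariation_toReal, signedIntegral, mul_add]
  calc |(∫ x, f x ∂ν.toJordanDecomposition.posPart)
      - ∫ x, f x ∂ν.toJordanDecomposition.negPart|
      ≤ |∫ x, f x ∂ν.toJordanDecomposition.posPart|
        + |∫ x, f x ∂ν.toJordanDecomposition.negPart| := abs_sub _ _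
    _ ≤ _ := add_le_add h1 h2

lemma signedIntegral_sub (ν : SignedMeasure α) {f g : α → ℝ}
    (hfp : Integrable f ν.toJordanDecomposition.posPart)
    (hfq : Integrable f ν.toJordanDecomposition.negPart)
    (hgp : Integrable g ν.toJordanDecomposition.posPart)
    (hgq : Integrable g ν.toJordanDecomposition.negPart) :
    signedIntegral ν (fun x => f x - g x) = signedIntegral ν f - signedIntegral ν g := by
  simp only [signedIntegral, integral_sub hfp hgp, integral_sub hfq hgq]
  ring

lemma tendsto_cocompact_of_vanish {β : Type*} [TopologicalSpace β] {g : β → ℝ}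
    (h : ∀ δ > (0:ℝ), ∃ K : Set β, IsCompact K ∧ ∀ x ∉ K, |g x| ≤ δ) :
    Tendsto g (cocompact β) (nhds 0) := by
  rw [hasBasis_cocompact.tendsto_iff Metric.nhds_basis_closedBall]
  intro δ hδ
  obtain ⟨K, hKc, hKb⟩ := h δ hδ
  exact ⟨K, hKc, fun x hx => by
    simpa [Metric.mem_closedBall, Real.dist_eq] using hKb x hx⟩

lemma lim_le_of_limsup {u a : ℕ → ℝ} {L δ Cb : ℝ}
    (hu : Tendsto u atTop (nhds L)) (hle : ∀ n, u n ≤ a n)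
    (hCb : ∀ n, a n ≤ Cb) (hls : limsup a atTop ≤ δ) : L ≤ δ := by
  have h1 : limsup u atTop = L := hu.limsup_eq
  have h2 : limsup u atTop ≤ limsup a atTop :=
    limsup_le_limsup (Filter.Eventually.of_forall hle)
      (hu.isBoundedUnder_ge.isCoboundedUnder_le)
      (isBoundedUnder_of ⟨Cb, hCb⟩)
  linarith

/-- Core regularity lemma: a continuous bump capturing most of `p D`
while seeing little of `q`, supported within distance `r0` of `D`. -/
lemma core_bump {α : Type*} [MeasurableSpace α] [MetricSpace α] [ProperSpace α]
    [SecondCountableTopology α] [BorelSpace α]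
    (p q : Measure α) [IsFiniteMeasure p] [IsFiniteMeasure q] [p.InnerRegularCompactLTTop]
    {D : Set α} (hD : MeasurableSet D) (hq : q D = 0) {ε r0 : ℝ} (hε : 0 < ε) (hr0 : 0 < r0) :
    ∃ f : α → ℝ, Continuous f ∧ Tendsto f (cocompact α) (nhds 0) ∧
      (∀ x, 0 ≤ f x) ∧ (∀ x, f x ≤ 1) ∧ (∀ x, f x ≠ 0 → ∃ y ∈ D, dist x y < r0) ∧
      (p D).toReal ≤ (∫ x, f x ∂p) - (∫ x, f x ∂q) + ε := by
  have hε2 : (ENNReal.ofReal (ε/2)) ≠ 0 := by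
    simp [ENNReal.ofReal_eq_zero]; linarith
  obtain ⟨K, hKD, hKc, hK⟩ := hD.exists_isCompact_lt_add (measure_ne_top p D) hε2
  rcases K.eq_empty_or_nonempty with hKe | hKne
  · refine ⟨fun _ => 0, continuous_const, tendsto_const_nhds, fun x => le_rfl,
      fun x => zero_le_one, fun x hx => absurd rfl hx, ?_⟩
    rw [hKe] at hK
    simp only [measure_empty, zero_add] at hK
    have := ENNReal.toReal_le_of_le_ofReal (by linarith) hK.le
    simp only [integral_zero]
    linarith
  · have hqK : q K = 0 := le_antisymm (hq ▸ measure_mono hKD) zero_le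
    have htd : Tendsto (fun r => q (cthickening r K)) (nhds 0) (nhds 0) := by
      have := tendsto_measure_cthickening_of_isCompact (μ := q) hKc
      rwa [hqK] at this
    have h1 : ∀ᶠ r in nhds (0:ℝ), q (cthickening r K) < ENNReal.ofReal (ε/2) :=
      htd.eventually_lt_const (by simpa [pos_iff_ne_zero] using hε2)
    have h2 : ∀ᶠ r in nhdsWithin (0:ℝ) (Set.Ioi 0),
        q (cthickening r K) < ENNReal.ofReal (ε/2) := nhdsWithin_le_nhds h1
    have h3 : Set.Ioo (0:ℝ) r0 ∈ nhdsWithin (0:ℝ) (Set.Ioi 0) :=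
      Ioo_mem_nhdsGT_of_mem ⟨le_refl 0, hr0⟩
    obtain ⟨r, hrq, hr0', hrr0⟩ : ∃ r, q (cthickening r K) < ENNReal.ofReal (ε/2)
        ∧ 0 < r ∧ r < r0 := by
      obtain ⟨r, h, h'⟩ := (h2.and (eventually_of_mem h3 (fun x hx => hx))).exists
      exact ⟨r, h, h'.1, h'.2⟩
    set f : α → ℝ := fun x => max 0 (1 - infDist x K / r) with hf
    have hfc : Continuous f :=
      continuous_const.max (continuous_const.sub ((continuous_infDist_pt K).div_const r))
    have hf0 : ∀ x, 0 ≤ f x := fun x => le_max_left _ _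
    have hf1 : ∀ x, f x ≤ 1 := fun x => by
      apply max_le zero_le_one
      have h5 := infDist_nonneg (s := K) (x := x)
      have : 0 ≤ infDist x K / r := div_nonneg h5 hr0'.le
      linarith
    have hfsupp : ∀ x, f x ≠ 0 → infDist x K < r := by
      intro x hx
      by_contra h
      push_neg at h
      have : 1 - infDist x K / r ≤ 0 := by
        have : 1 ≤ infDist x K / r := (one_le_div hr0').2 h
        linarith
      exact hx (max_eq_left this)
    have hfK : ∀ x ∈ K, f x = 1 := by
      intro x hx
      simp [hf, infDist_zero_of_mem hx, hr0'.ne']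
    have hsuppc : ∀ x, f x ≠ 0 → x ∈ cthickening r K := by
      intro x hx
      obtain ⟨y, hy, hd⟩ := (infDist_lt_iff hKne).1 (hfsupp x hx)
      exact mem_cthickening_of_dist_le x y r K hy hd.le
    have hczero : ∀ x ∉ cthickening r K, f x = 0 := by
      intro x hx; by_contra h; exact hx (hsuppc x h)
    have hcocompact : Tendsto f (cocompact α) (nhds 0) := by
      rw [hasBasis_cocompact.tendsto_iff Metric.nhds_basis_closedBall]
      intro δ hδ
      exact ⟨cthickening r K, hKc.cthickening, fun x hx => by
        simp [Metric.mem_closedBall, Real.dist_eq, hczero x hx, hδ.le]⟩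
    refine ⟨f, hfc, hcocompact, hf0, hf1, ?_, ?_⟩
    · intro x hx
      obtain ⟨y, hy, hd⟩ := (infDist_lt_iff hKne).1 (hfsupp x hx)
      exact ⟨y, hKD hy, hd.trans hrr0⟩
    · have hfi : ∀ (m : Measure α) [IsFiniteMeasure m], Integrable f m := fun m _ =>
        integrable_of_bdd (hfc.measurable.aestronglyMeasurable) (M := 1)
          (fun x => abs_le.2 ⟨by linarith [hf0 x], hf1 x⟩)
      have hip : (p K).toReal ≤ ∫ x, f x ∂p := by
        have hind : ∀ x, K.indicator (fun _ => (1:ℝ)) x ≤ f x := by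
          intro x
          by_cases hx : x ∈ K
          · simp [Set.indicator_of_mem hx, hfK x hx]
          · simp [Set.indicator_of_notMem hx, hf0 x]
        calc (p K).toReal = ∫ x, K.indicator (fun _ => (1:ℝ)) x ∂p := by
              rw [integral_indicator_const (1:ℝ) (hKc.isClosed.measurableSet)]; simp; rfl
          _ ≤ ∫ x, f x ∂p := integral_mono
              ((integrable_const (1:ℝ)).indicator hKc.isClosed.measurableSet) (hfi p) hind
      have hiq : ∫ x, f x ∂q ≤ ε/2 := by
        have hq1 : |∫ x, f x ∂q| ≤ 1 * (q (cthickening r K)).toReal :=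
          abs_integral_le_of_support hfc.measurable.aestronglyMeasurable
            (fun x => abs_le.2 ⟨by linarith [hf0 x], hf1 x⟩) hczero
        have h4 : (q (cthickening r K)).toReal ≤ ε/2 :=
          ENNReal.toReal_le_of_le_ofReal (by linarith) hrq.le
        calc ∫ x, f x ∂q ≤ |∫ x, f x ∂q| := le_abs_self _
          _ ≤ 1 * (q (cthickening r K)).toReal := hq1
          _ ≤ ε/2 := by linarith
      have hpD : (p D).toReal ≤ (p K).toReal + ε/2 := by
        have hub : p D ≤ p K + ENNReal.ofReal (ε/2) := hK.le
        have h6 : (p D).toReal ≤ (p K + ENNReal.ofReal (ε/2)).toReal :=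
          ENNReal.toReal_mono (by finiteness) hub
        rwa [ENNReal.toReal_add (measure_ne_top _ _) (by finiteness),
          ENNReal.toReal_ofReal (by linarith)] at h6
      linarith

end Helpers

section BanachSteinhaus

open Metric Set

variable {α : Type*} [MeasurableSpace α] [MetricSpace α] [ProperSpace α]
    [SecondCountableTopology α] [BorelSpace α]

/-- A finite signed measure as a continuous linear functional on `C₀`. -/
noncomputable def tvFunc (ν : SignedMeasure α) :
    ZeroAtInftyContinuousMap α ℝ →L[ℝ] ℝ := by
  refine LinearMap.mkContinuous
    { toFun := fun f => signedIntegral ν f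
      map_add' := ?_
      map_smul' := ?_ }
    ((ν.totalVariation Set.univ).toReal) ?_
  · intro f g
    simp only [signedIntegral, ZeroAtInftyContinuousMap.coe_add, Pi.add_apply]
    rw [integral_add, integral_add]
    · ring
    all_goals first
      | exact (BoundedContinuousFunction.integrable _ f.toBCF)
      | exact (BoundedContinuousFunction.integrable _ g.toBCF)
  · intro c f
    simp only [signedIntegral, ZeroAtInftyContinuousMap.coe_smul, Pi.smul_apply,
      smul_eq_mul, RingHom.id_apply]
    rw [integral_const_mul, integral_const_mul]
    ring
  · intro f
    have hb : ∀ x, |f x| ≤ ‖f‖ := by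
      intro x
      rw [← Real.norm_eq_abs, ← ZeroAtInftyContinuousMap.norm_toBCF_eq_norm]
      exact f.toBCF.norm_coe_le_norm x
    have h1 : |∫ x, f x ∂ν.toJordanDecomposition.posPart|
        ≤ ‖f‖ * (ν.toJordanDecomposition.posPart Set.univ).toReal :=
      abs_integral_le_of_support f.continuous.measurable.aestronglyMeasurable hb
        (S := Set.univ) (fun x hx => absurd (Set.mem_univ x) hx)
    have h2 : |∫ x, f x ∂ν.toJordanDecomposition.negPart|
        ≤ ‖f‖ * (ν.toJordanDecomposition.negPart Set.univ).toReal :=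
      abs_integral_le_of_support f.continuous.measurable.aestronglyMeasurable hb
        (S := Set.univ) (fun x hx => absurd (Set.mem_univ x) hx)
    rw [Real.norm_eq_abs]
    calc |signedIntegral ν f| ≤ |∫ x, f x ∂ν.toJordanDecomposition.posPart|
          + |∫ x, f x ∂ν.toJordanDecomposition.negPart| := abs_sub _ _
      _ ≤ ‖f‖ * (ν.toJordanDecomposition.posPart Set.univ).toReal
          + ‖f‖ * (ν.toJordanDecomposition.negPart Set.univ).toReal := add_le_add h1 h2
      _ = (ν.totalVariation Set.univ).toReal * ‖f‖ := by
          rw [totalVariation_toReal]; ring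

@[simp] lemma tvFunc_apply (ν : SignedMeasure α) (f : ZeroAtInftyContinuousMap α ℝ) :
    tvFunc ν f = signedIntegral ν f := rfl

/-- Bundling a suitable function as an element of `C₀` with norm at most one. -/
lemma exists_bundle {f : α → ℝ} (hc : Continuous f) (h0 : Tendsto f (cocompact α) (nhds 0))
    (hb : ∀ x, |f x| ≤ 1) :
    ∃ F : ZeroAtInftyContinuousMap α ℝ, (⇑F = f) ∧ ‖F‖ ≤ 1 := by
  refine ⟨⟨⟨f, hc⟩, h0⟩, rfl, ?_⟩
  rw [← ZeroAtInftyContinuousMap.norm_toBCF_eq_norm]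
  exact BoundedContinuousFunction.norm_le zero_le_one |>.2 fun x => by
    simpa [Real.norm_eq_abs] using hb x

variable [CompleteSpace α]

/-- Uniform boundedness of the total variations, via Banach–Steinhaus. -/
lemma uniform_tv_bound (μn : ℕ → SignedMeasure α) (μ : SignedMeasure α)
    (hconv : ∀ f : α → ℝ, Continuous f → Tendsto f (cocompact α) (nhds 0) →
      Tendsto (fun n => signedIntegral (μn n) f) atTop (nhds (signedIntegral μ f))) :
    ∃ Cb : ℝ, ∀ n, ((μn n).totalVariation Set.univ).toReal ≤ Cb := by
  have hptw : ∀ F : ZeroAtInftyContinuousMap α ℝ, ∃ Cp, ∀ n, ‖tvFunc (μn n) F‖ ≤ Cp := by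
    intro F
    have ht : Tendsto (fun n => signedIntegral (μn n) F) atTop
        (nhds (signedIntegral μ F)) := hconv F F.continuous F.zero_at_infty'
    obtain ⟨Cp, hCub⟩ := ht.norm.bddAbove_range
    exact ⟨Cp, fun n => hCub (Set.mem_range_self n)⟩
  obtain ⟨C', hC'⟩ := banach_steinhaus hptw
  refine ⟨2*C' + 2, fun n => ?_⟩
  set p := (μn n).toJordanDecomposition.posPart with hp
  set q := (μn n).toJordanDecomposition.negPart with hq
  obtain ⟨S, hSm, hpS, hqSc⟩ := (μn n).toJordanDecomposition.mutuallySingular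
  obtain ⟨f₁, hc₁, h0₁, hlb₁, hub₁, _, hest₁⟩ :=
    core_bump p q hSm.compl hqSc one_pos one_pos
  obtain ⟨f₂, hc₂, h0₂, hlb₂, hub₂, _, hest₂⟩ :=
    core_bump q p hSm hpS one_pos one_pos
  obtain ⟨F₁, hF₁, hnF₁⟩ := exists_bundle hc₁ h0₁
    (fun x => abs_le.2 ⟨by linarith [hlb₁ x], hub₁ x⟩)
  obtain ⟨F₂, hF₂, hnF₂⟩ := exists_bundle hc₂ h0₂
    (fun x => abs_le.2 ⟨by linarith [hlb₂ x], hub₂ x⟩)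
  have hTb : ∀ (F : ZeroAtInftyContinuousMap α ℝ), ‖F‖ ≤ 1 →
      |signedIntegral (μn n) F| ≤ C' := by
    intro F hF
    have := (tvFunc (μn n)).le_opNorm F
    have h2 : ‖tvFunc (μn n)‖ * ‖F‖ ≤ C' * 1 := by
      apply mul_le_mul (hC' n) hF (norm_nonneg F)
      exact le_trans (norm_nonneg _) (hC' n)
    rw [tvFunc_apply, Real.norm_eq_abs] at this
    linarith
  have hb₁ : |signedIntegral (μn n) f₁| ≤ C' := by
    have := hTb F₁ hnF₁; rwa [hF₁] at this
  have hb₂ : |signedIntegral (μn n) f₂| ≤ C' := by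
    have := hTb F₂ hnF₂; rwa [hF₂] at this
  have hpuniv : (p Set.univ).toReal = (p Sᶜ).toReal := by
    rw [← measure_add_measure_compl (μ := p) hSm, hpS, zero_add]
  have hquniv : (q Set.univ).toReal = (q S).toReal := by
    rw [← measure_add_measure_compl (μ := q) hSm, hqSc, add_zero]
  have e₁ : (p Sᶜ).toReal ≤ signedIntegral (μn n) f₁ + 1 := by
    have : (∫ x, f₁ x ∂p) - ∫ x, f₁ x ∂q = signedIntegral (μn n) f₁ := rfl
    linarith [hest₁, this ▸ hest₁]
  have e₂ : (q S).toReal ≤ -signedIntegral (μn n) f₂ + 1 := by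
    have h7 : (∫ x, f₂ x ∂q) - ∫ x, f₂ x ∂p = -signedIntegral (μn n) f₂ := by
      rw [signedIntegral]; ring
    rw [← h7]
    exact hest₂
  rw [totalVariation_toReal, ← hp, ← hq, hpuniv, hquniv]
  have := abs_le.1 hb₁
  have := abs_le.1 hb₂
  linarith

/-- The limit does not charge `C`. -/
lemma tv_C_zero (μn : ℕ → SignedMeasure α) (μ : SignedMeasure α)
    (hconv : ∀ f : α → ℝ, Continuous f → Tendsto f (cocompact α) (nhds 0) →
      Tendsto (fun n => signedIntegral (μn n) f) atTop (nhds (signedIntegral μ f)))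
    {C : Set α} (hC : IsClosed C)
    (hnc : ∀ δ > (0 : ℝ), ∃ R > (0 : ℝ),
      limsup (fun n => ((μn n).totalVariation {x | Metric.infDist x C < R}).toReal)
        atTop ≤ δ)
    {Cb : ℝ} (hCb : ∀ n, ((μn n).totalVariation Set.univ).toReal ≤ Cb) :
    μ.totalVariation C = 0 := by
  set p := μ.toJordanDecomposition.posPart with hp
  set q := μ.toJordanDecomposition.negPart with hq
  obtain ⟨S, hSm, hpS, hqSc⟩ := μ.toJordanDecomposition.mutuallySingular
  have hCm : MeasurableSet C := hC.measurableSet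
  have haux : ∀ {R : ℝ}, 0 < R → ∀ (f : α → ℝ),
      Measurable f → (∀ x, 0 ≤ f x) → (∀ x, f x ≤ 1) →
      (∀ x, f x ≠ 0 → ∃ y ∈ C, dist x y < R) →
      ∀ n, |signedIntegral (μn n) f|
        ≤ ((μn n).totalVariation {x | Metric.infDist x C < R}).toReal := by
    intro R hR f hm h0 h1 hsup n
    have hs : ∀ x ∉ {x | Metric.infDist x C < R}, f x = 0 := by
      intro x hx
      by_contra hne
      obtain ⟨y, hy, hd⟩ := hsup x hne
      exact hx (lt_of_le_of_lt (Metric.infDist_le_dist_of_mem hy) hd)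
    have := abs_signedIntegral_le_of_support (μn n) hm
      (fun x => abs_le.2 ⟨by linarith [h0 x], h1 x⟩) hs
    linarith [this]
  have hbound : ∀ n R, ((μn n).totalVariation {x | Metric.infDist x C < R}).toReal ≤ Cb := by
    intro n R
    haveI : IsFiniteMeasure ((μn n).totalVariation) := by
      rw [SignedMeasure.totalVariation]; infer_instance
    refine le_trans ?_ (hCb n)
    exact ENNReal.toReal_mono (measure_ne_top _ _) (measure_mono (Set.subset_univ _))
  have hkey : ∀ (f : α → ℝ) {R : ℝ}, 0 < R → Continuous f →
      Tendsto f (cocompact α) (nhds 0) → (∀ x, 0 ≤ f x) → (∀ x, f x ≤ 1) →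
      (∀ x, f x ≠ 0 → ∃ y ∈ C, dist x y < R) →
      ∀ δ, (limsup (fun n => ((μn n).totalVariation {x | Metric.infDist x C < R}).toReal)
        atTop ≤ δ) → |signedIntegral μ f| ≤ δ := by
    intro f R hR hc h0c h0 h1 hsup δ hls
    have hu := hconv f hc h0c
    have h1' := lim_le_of_limsup hu
      (fun n => (le_abs_self _).trans (haux hR f hc.measurable h0 h1 hsup n))
      (fun n => hbound n R) hls
    have h2' := lim_le_of_limsup hu.neg
      (fun n => (neg_le_abs _).trans (haux hR f hc.measurable h0 h1 hsup n))
      (fun n => hbound n R) hls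
    rw [abs_le]
    constructor <;> linarith
  have claimA : ∀ δ' > (0:ℝ), (p C).toReal ≤ δ' := by
    intro δ' hδ'
    obtain ⟨R, hR, hls⟩ := hnc (δ'/2) (by linarith)
    have hqD : q (C ∩ Sᶜ) = 0 :=
      le_antisymm (hqSc ▸ measure_mono Set.inter_subset_right) zero_le
    obtain ⟨f, hc, h0c, h0, h1, hsup, hest⟩ :=
      core_bump p q (hCm.inter hSm.compl) hqD (half_pos hδ') hR
    have hpC : p (C ∩ Sᶜ) = p C := by
      have h8 : p (C ∩ S) = 0 :=
        le_antisymm (hpS ▸ measure_mono Set.inter_subset_right) zero_le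
      have h9 := measure_inter_add_diff (μ := p) C hSm
      rw [h8, zero_add, Set.diff_eq] at h9
      exact h9
    have hsup' : ∀ x, f x ≠ 0 → ∃ y ∈ C, dist x y < R := by
      intro x hx
      obtain ⟨y, hy, hd⟩ := hsup x hx
      exact ⟨y, hy.1, hd⟩
    have hI : |signedIntegral μ f| ≤ δ'/2 := hkey f hR hc h0c h0 h1 hsup' _ hls
    have hsi : (∫ x, f x ∂p) - ∫ x, f x ∂q = signedIntegral μ f := rfl
    rw [← hpC]
    rw [hsi] at hest
    have := (abs_le.1 hI).2
    linarith
  have claimB : ∀ δ' > (0:ℝ), (q C).toReal ≤ δ' := by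
    intro δ' hδ'
    obtain ⟨R, hR, hls⟩ := hnc (δ'/2) (by linarith)
    have hpD : p (C ∩ S) = 0 :=
      le_antisymm (hpS ▸ measure_mono Set.inter_subset_right) zero_le
    obtain ⟨f, hc, h0c, h0, h1, hsup, hest⟩ :=
      core_bump q p (hCm.inter hSm) hpD (half_pos hδ') hR
    have hqC : q (C ∩ S) = q C := by
      have h8 : q (C ∩ Sᶜ) = 0 :=
        le_antisymm (hqSc ▸ measure_mono Set.inter_subset_right) zero_le
      have h9 := measure_inter_add_diff (μ := q) C hSm
      rw [Set.diff_eq, h8, add_zero] at h9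
      exact h9
    have hsup' : ∀ x, f x ≠ 0 → ∃ y ∈ C, dist x y < R := by
      intro x hx
      obtain ⟨y, hy, hd⟩ := hsup x hx
      exact ⟨y, hy.1, hd⟩
    have hI : |signedIntegral μ f| ≤ δ'/2 := hkey f hR hc h0c h0 h1 hsup' _ hls
    have hsi : (∫ x, f x ∂q) - ∫ x, f x ∂p = -signedIntegral μ f := by
      rw [signedIntegral]; ring
    rw [← hqC]
    rw [hsi] at hest
    have := (abs_le.1 hI).1
    linarith
  have hpC0 : p C = 0 := by
    have h10 : (p C).toReal ≤ 0 := by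
      by_contra h
      push_neg at h
      have := claimA ((p C).toReal / 2) (by linarith)
      linarith
    have h11 : (p C).toReal = 0 := le_antisymm h10 ENNReal.toReal_nonneg
    rcases (ENNReal.toReal_eq_zero_iff _).1 h11 with h | h
    · exact h
    · exact absurd h (measure_ne_top _ _)
  have hqC0 : q C = 0 := by
    have h10 : (q C).toReal ≤ 0 := by
      by_contra h
      push_neg at h
      have := claimB ((q C).toReal / 2) (by linarith)
      linarith
    have h11 : (q C).toReal = 0 := le_antisymm h10 ENNReal.toReal_nonneg
    rcases (ENNReal.toReal_eq_zero_iff _).1 h11 with h | h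
    · exact h
    · exact absurd h (measure_ne_top _ _)
  rw [SignedMeasure.totalVariation, Measure.add_apply, ← hp, ← hq, hpC0, hqC0, add_zero]

end BanachSteinhaus

/-- Proposition 3.11: weak-star convergence of finite signed Radon measures plus a
non-concentration hypothesis near a closed set `C` allows passing to the limit against
bounded measurable test functions discontinuous only on `C` and vanishing at infinity. -/
theorem stmt_4 (N : ℕ) (hN : 1 ≤ N)
    (μn : ℕ → MeasureTheory.SignedMeasure (EuclideanSpace ℝ (Fin N)))
    (μ : MeasureTheory.SignedMeasure (EuclideanSpace ℝ (Fin N)))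
    (hconv : ∀ f : EuclideanSpace ℝ (Fin N) → ℝ, Continuous f →
      Tendsto f (cocompact (EuclideanSpace ℝ (Fin N))) (nhds 0) →
      Tendsto (fun n => signedIntegral (μn n) f) atTop (nhds (signedIntegral μ f)))
    (C : Set (EuclideanSpace ℝ (Fin N))) (hC : IsClosed C)
    (hnc : ∀ δ > (0 : ℝ), ∃ R > (0 : ℝ),
      limsup (fun n => ((μn n).totalVariation {x | Metric.infDist x C < R}).toReal)
        atTop ≤ δ)
    (φ : EuclideanSpace ℝ (Fin N) → ℝ) (hφmeas : Measurable φ)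
    (hφbdd : ∃ M, ∀ x, |φ x| ≤ M)
    (hφvanish : ∀ δ > (0 : ℝ), ∃ K : Set (EuclideanSpace ℝ (Fin N)),
      IsCompact K ∧ ∀ x ∉ K, |φ x| ≤ δ)
    (hφdisc : {x | ¬ ContinuousAt φ x} ⊆ C) :
    Tendsto (fun n => signedIntegral (μn n) φ) atTop (nhds (signedIntegral μ φ)) := by
  obtain ⟨Cb, hCb⟩ := uniform_tv_bound μn μ hconv
  rcases C.eq_empty_or_nonempty with hCe | hCne
  · have hφcont : Continuous φ := by
      rw [continuous_iff_continuousAt]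
      intro x
      by_contra h
      have hx : x ∈ C := hφdisc h
      rw [hCe] at hx
      exact hx
    exact hconv φ hφcont (tendsto_cocompact_of_vanish hφvanish)
  have htvC : μ.totalVariation C = 0 := tv_C_zero μn μ hconv hC hnc hCb
  haveI : IsFiniteMeasure (μ.totalVariation) := by
    rw [MeasureTheory.SignedMeasure.totalVariation]; infer_instance
  obtain ⟨M₀, hM₀⟩ := hφbdd
  set M := max M₀ 0 with hM
  have hMnn : 0 ≤ M := le_max_right _ _
  have hM1 : 0 < M + 1 := by linarith
  have hb : ∀ x, |φ x| ≤ M := fun x => (hM₀ x).trans (le_max_left _ _)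
  rw [Metric.tendsto_atTop]
  intro ε hε
  have hδpos : 0 < ε/(8*(M+1)) := by positivity
  obtain ⟨R, hR, hls⟩ := hnc (ε/(8*(M+1))) hδpos
  have hmeasΩ : ∀ r : ℝ, MeasurableSet {x : EuclideanSpace ℝ (Fin N) | Metric.infDist x C < r} :=
    fun r => (isOpen_lt (Metric.continuous_infDist_pt C) continuous_const).measurableSet
  -- choose a small radius R₀ with small limit total variation
  have hanti : Antitone (fun k : ℕ =>
      {x : EuclideanSpace ℝ (Fin N) | Metric.infDist x C < R/((k:ℝ)+1)}) := by
    intro k l hkl x hx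
    have hcast : (k:ℝ) + 1 ≤ (l:ℝ) + 1 := by
      have : (k:ℝ) ≤ (l:ℝ) := by exact_mod_cast hkl
      linarith
    have hd : R/((l:ℝ)+1) ≤ R/((k:ℝ)+1) :=
      div_le_div_of_nonneg_left hR.le (by positivity) hcast
    exact lt_of_lt_of_le hx hd
  have hiInter : (⋂ k : ℕ,
      {x : EuclideanSpace ℝ (Fin N) | Metric.infDist x C < R/((k:ℝ)+1)}) = C := by
    ext x
    simp only [Set.mem_iInter, Set.mem_setOf_eq]
    constructor
    · intro h
      have h0 : Metric.infDist x C ≤ 0 := by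
        by_contra hpos
        push_neg at hpos
        obtain ⟨k, hk'⟩ := exists_nat_gt (R / Metric.infDist x C)
        have hlt : R/((k:ℝ)+1) < Metric.infDist x C := by
          rw [div_lt_iff₀ (by positivity)]
          rw [div_lt_iff₀ hpos] at hk'
          nlinarith
        exact absurd (h k) (not_lt.2 hlt.le)
      have hz : Metric.infDist x C = 0 := le_antisymm h0 Metric.infDist_nonneg
      have hcl := (Metric.mem_closure_iff_infDist_zero hCne).2 hz
      rwa [hC.closure_eq] at hcl
    · intro hx k
      rw [Metric.infDist_zero_of_mem hx]
      positivity
  have htd : Tendsto (fun k : ℕ =>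
      μ.totalVariation {x : EuclideanSpace ℝ (Fin N) | Metric.infDist x C < R/((k:ℝ)+1)})
      atTop (nhds 0) := by
    have h := tendsto_measure_iInter_atTop (μ := μ.totalVariation)
      (fun k => (hmeasΩ _).nullMeasurableSet) hanti ⟨0, measure_ne_top _ _⟩
    rw [hiInter, htvC] at h
    exact h
  have hevk : ∀ᶠ k : ℕ in atTop,
      μ.totalVariation {x : EuclideanSpace ℝ (Fin N) | Metric.infDist x C < R/((k:ℝ)+1)}
        < ENNReal.ofReal (ε/(4*(M+1))) := by
    apply htd.eventually_lt_const
    rw [ENNReal.ofReal_pos]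
    positivity
  obtain ⟨k, hk⟩ := hevk.exists
  set R₀ := R/((k:ℝ)+1) with hR₀def
  have hR₀pos : 0 < R₀ := by positivity
  have hR₀R : R₀ ≤ R := by
    rw [hR₀def]
    apply div_le_self hR.le
    have : (0:ℝ) ≤ (k:ℝ) := Nat.cast_nonneg k
    linarith
  have hsub : {x : EuclideanSpace ℝ (Fin N) | Metric.infDist x C < R₀}
      ⊆ {x : EuclideanSpace ℝ (Fin N) | Metric.infDist x C < R} :=
    fun x hx => lt_of_lt_of_le hx hR₀R
  -- the cutoff
  set χ : EuclideanSpace ℝ (Fin N) → ℝ := fun x => min (Metric.infDist x C / R₀) 1 with hχ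
  have hχcont : Continuous χ :=
    ((Metric.continuous_infDist_pt C).div_const R₀).min continuous_const
  have hχ0 : ∀ x, 0 ≤ χ x :=
    fun x => le_min (div_nonneg Metric.infDist_nonneg hR₀pos.le) zero_le_one
  have hχ1 : ∀ x, χ x ≤ 1 := fun x => min_le_right _ _
  set ψ : EuclideanSpace ℝ (Fin N) → ℝ := fun x => φ x * χ x with hψ
  have hψle : ∀ x, |ψ x| ≤ |φ x| := by
    intro x
    rw [hψ]
    dsimp only
    rw [abs_mul]
    calc |φ x| * |χ x| ≤ |φ x| * 1 :=
          mul_le_mul_of_nonneg_left (abs_le.2 ⟨by linarith [hχ0 x], hχ1 x⟩) (abs_nonneg _)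
      _ = |φ x| := mul_one _
  have hψb : ∀ x, |ψ x| ≤ M := fun x => (hψle x).trans (hb x)
  have hψcont : Continuous ψ := by
    rw [continuous_iff_continuousAt]
    intro c
    by_cases hc : c ∈ C
    · have hdz : Metric.infDist c C = 0 := Metric.infDist_zero_of_mem hc
      have hψc : ψ c = 0 := by simp [hψ, hχ, hdz]
      unfold ContinuousAt
      rw [hψc]
      apply squeeze_zero_norm (a := fun x => M * (dist x c / R₀))
      · intro x
        rw [Real.norm_eq_abs, hψ]
        dsimp only
        rw [abs_mul]
        have h3 : |χ x| ≤ dist x c / R₀ := by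
          rw [abs_of_nonneg (hχ0 x)]
          refine le_trans (min_le_left _ _) ?_
          gcongr
          exact Metric.infDist_le_dist_of_mem hc
        exact le_trans (mul_le_mul (hb x) h3 (abs_nonneg _) hMnn) le_rfl
      · have hcont : Continuous fun x : EuclideanSpace ℝ (Fin N) => M * (dist x c / R₀) :=
          continuous_const.mul ((continuous_id.dist continuous_const).div_const R₀)
        have h5 := hcont.tendsto c
        simpa [dist_self] using h5
    · have hφc : ContinuousAt φ c := by
        by_contra h
        exact hc (hφdisc h)
      exact hφc.mul hχcont.continuousAt
  have hψvan : Tendsto ψ (cocompact (EuclideanSpace ℝ (Fin N))) (nhds 0) := by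
    apply tendsto_cocompact_of_vanish
    intro δ hδ
    obtain ⟨K, hKc, hKb⟩ := hφvanish δ hδ
    exact ⟨K, hKc, fun x hx => (hψle x).trans (hKb x hx)⟩
  have hmid := hconv ψ hψcont hψvan
  have hψmeas : Measurable ψ := hφmeas.mul hχcont.measurable
  -- the error bound, valid for every finite signed measure
  have herr : ∀ ν : MeasureTheory.SignedMeasure (EuclideanSpace ℝ (Fin N)),
      |signedIntegral ν φ - signedIntegral ν ψ|
        ≤ M * (ν.totalVariation {x | Metric.infDist x C < R₀}).toReal := by
    intro ν
    rw [← signedIntegral_sub ν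
      (integrable_of_bdd hφmeas.aestronglyMeasurable hb)
      (integrable_of_bdd hφmeas.aestronglyMeasurable hb)
      (integrable_of_bdd hψmeas.aestronglyMeasurable hψb)
      (integrable_of_bdd hψmeas.aestronglyMeasurable hψb)]
    apply abs_signedIntegral_le_of_support ν (hφmeas.sub hψmeas)
    · intro x
      have hrw : φ x - ψ x = φ x * (1 - χ x) := by rw [hψ]; ring
      rw [Pi.sub_apply, hrw, abs_mul]
      calc |φ x| * |1 - χ x| ≤ M * 1 := by
            apply mul_le_mul (hb x) _ (abs_nonneg _) hMnn
            rw [abs_le]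
            constructor
            · linarith [hχ1 x]
            · linarith [hχ0 x]
        _ = M := mul_one M
    · intro x hx
      have hge : R₀ ≤ Metric.infDist x C := not_lt.1 hx
      have hone : χ x = 1 := min_eq_right ((one_le_div hR₀pos).2 hge)
      rw [hψ]
      simp only [Pi.sub_apply]
      rw [hone]
      ring
  -- eventual bounds
  have hev1 : ∀ᶠ n in atTop,
      ((μn n).totalVariation {x | Metric.infDist x C < R}).toReal < 2 * (ε/(8*(M+1))) := by
    apply eventually_lt_of_limsup_lt
    · exact lt_of_le_of_lt hls (by linarith)
    · refine isBoundedUnder_of ⟨Cb, fun n => ?_⟩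
      haveI : IsFiniteMeasure ((μn n).totalVariation) := by
        rw [MeasureTheory.SignedMeasure.totalVariation]; infer_instance
      exact le_trans (ENNReal.toReal_mono (measure_ne_top _ _)
        (measure_mono (Set.subset_univ _))) (hCb n)
  have hev2 : ∀ᶠ n in atTop, |signedIntegral (μn n) ψ - signedIntegral μ ψ| < ε/4 := by
    obtain ⟨N₁, hN₁⟩ := Metric.tendsto_atTop.1 hmid (ε/4) (by linarith)
    filter_upwards [eventually_ge_atTop N₁] with n hn
    have h6 := hN₁ n hn
    rwa [Real.dist_eq] at h6
  obtain ⟨N₂, hN₂⟩ := eventually_atTop.1 (hev1.and hev2)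
  refine ⟨N₂, fun n hn => ?_⟩
  obtain ⟨h1, h2⟩ := hN₂ n hn
  rw [Real.dist_eq]
  haveI : IsFiniteMeasure ((μn n).totalVariation) := by
    rw [MeasureTheory.SignedMeasure.totalVariation]; infer_instance
  have hfrac : M * (2 * (ε/(8*(M+1)))) ≤ ε/4 := by
    have heq : M * (2 * (ε / (8 * (M+1)))) = ε/4 * (M/(M+1)) := by
      field_simp
      ring
    have hle1 : M/(M+1) ≤ 1 := (div_le_one hM1).2 (by linarith)
    rw [heq]
    calc ε/4 * (M/(M+1)) ≤ ε/4 * 1 := by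
          apply mul_le_mul_of_nonneg_left hle1 (by linarith)
      _ = ε/4 := mul_one _
  have hfrac2 : M * (ε/(4*(M+1))) ≤ ε/4 := by
    have heq : M * (ε / (4 * (M+1))) = ε/4 * (M/(M+1)) := by
      field_simp
    have hle1 : M/(M+1) ≤ 1 := (div_le_one hM1).2 (by linarith)
    rw [heq]
    calc ε/4 * (M/(M+1)) ≤ ε/4 * 1 := by
          apply mul_le_mul_of_nonneg_left hle1 (by linarith)
      _ = ε/4 := mul_one _
  have hterm1 : |signedIntegral (μn n) φ - signedIntegral (μn n) ψ| ≤ ε/4 := by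
    refine le_trans (herr (μn n)) ?_
    have hmono' : ((μn n).totalVariation {x | Metric.infDist x C < R₀}).toReal
        ≤ ((μn n).totalVariation {x | Metric.infDist x C < R}).toReal :=
      ENNReal.toReal_mono (measure_ne_top _ _) (measure_mono hsub)
    calc M * ((μn n).totalVariation {x | Metric.infDist x C < R₀}).toReal
        ≤ M * (2 * (ε/(8*(M+1)))) := by
          apply mul_le_mul_of_nonneg_left _ hMnn
          linarith
      _ ≤ ε/4 := hfrac
  have hterm3 : |signedIntegral μ φ - signedIntegral μ ψ| ≤ ε/4 := by
    refine le_trans (herr μ) ?_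
    have h7 : (μ.totalVariation {x | Metric.infDist x C < R₀}).toReal ≤ ε/(4*(M+1)) :=
      ENNReal.toReal_le_of_le_ofReal (by positivity) hk.le
    calc M * (μ.totalVariation {x | Metric.infDist x C < R₀}).toReal
        ≤ M * (ε/(4*(M+1))) := mul_le_mul_of_nonneg_left h7 hMnn
      _ ≤ ε/4 := hfrac2
  have htri : |signedIntegral (μn n) φ - signedIntegral μ φ|
      ≤ |signedIntegral (μn n) φ - signedIntegral (μn n) ψ|
        + |signedIntegral (μn n) ψ - signedIntegral μ ψ|
        + |signedIntegral μ φ - signedIntegral μ ψ| := by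
    have e1 : signedIntegral (μn n) φ - signedIntegral μ φ
        = (signedIntegral (μn n) φ - signedIntegral (μn n) ψ)
          + (signedIntegral (μn n) ψ - signedIntegral μ ψ)
          - (signedIntegral μ φ - signedIntegral μ ψ) := by ring
    rw [e1]
    calc |(signedIntegral (μn n) φ - signedIntegral (μn n) ψ)
          + (signedIntegral (μn n) ψ - signedIntegral μ ψ)
          - (signedIntegral μ φ - signedIntegral μ ψ)|
        ≤ |(signedIntegral (μn n) φ - signedIntegral (μn n) ψ)
          + (signedIntegral (μn n) ψ - signedIntegral μ ψ)|
          + |signedIntegral μ φ - signedIntegral μ ψ| := abs_sub _ _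
      _ ≤ _ := by
          have := abs_add_le (signedIntegral (μn n) φ - signedIntegral (μn n) ψ)
            (signedIntegral (μn n) ψ - signedIntegral μ ψ)
          linarith
  linarith
end

section
/- Let ε > 0 and r > 0, and set φ_ε(r) = (ε² + 3r²)^{−1/2} and φ_0(r) = 1/(√3 r) (the kernels for λ = 1/2, where c_{1/2} = 2^{1/(1/2)} − 1 = 3). Then 0 ≤ φ_0(r) − φ_ε(r) ≤ (ε^{1/2} / (√3 r)) · φ_ε(r)^{1/2}. -/
open Real

/-- Kernel estimate from the proof of Corollary 3.13 (case λ = 1/2, c_{1/2} = 3):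
for `ε > 0` and `r > 0`, with `φ_ε(r) = (ε² + 3r²)^{-1/2}` and `φ_0(r) = 1/(√3 r)`,
one has `0 ≤ φ_0(r) − φ_ε(r) ≤ (ε^{1/2}/(√3 r)) φ_ε(r)^{1/2}`. -/
theorem stmt_5 (ε r : ℝ) (hε : 0 < ε) (hr : 0 < r) :
    0 ≤ 1 / (Real.sqrt 3 * r) - (ε ^ 2 + 3 * r ^ 2) ^ (-(1 / 2) : ℝ) ∧
    1 / (Real.sqrt 3 * r) - (ε ^ 2 + 3 * r ^ 2) ^ (-(1 / 2) : ℝ)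
      ≤ Real.sqrt ε / (Real.sqrt 3 * r)
          * ((ε ^ 2 + 3 * r ^ 2) ^ (-(1 / 2) : ℝ)) ^ ((1 : ℝ) / 2) := by
  have h3 : (0:ℝ) < Real.sqrt 3 := Real.sqrt_pos.mpr (by norm_num)
  have hspos : 0 < Real.sqrt 3 * r := mul_pos h3 hr
  set s := Real.sqrt 3 * r with hs
  have hs2 : s ^ 2 = 3 * r ^ 2 := by
    rw [hs, mul_pow, Real.sq_sqrt (by norm_num : (0:ℝ) ≤ 3)]
  have ha : 0 < ε ^ 2 + 3 * r ^ 2 := by positivity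
  have hrw : (ε ^ 2 + 3 * r ^ 2) ^ (-(1 / 2) : ℝ)
      = (Real.sqrt (ε ^ 2 + 3 * r ^ 2))⁻¹ := by
    rw [Real.rpow_neg ha.le, ← Real.rpow_natCast, ← Real.sqrt_eq_rpow]
  rw [hrw]
  set b := Real.sqrt (ε ^ 2 + 3 * r ^ 2) with hb
  have hbpos : 0 < b := Real.sqrt_pos.mpr ha
  have hb2 : b ^ 2 = ε ^ 2 + 3 * r ^ 2 := Real.sq_sqrt ha.le
  have hsb : s ≤ b := by nlinarith [sq_nonneg ε]
  have hbse : b ≤ s + ε := by nlinarith [hspos, hε]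
  have heb : ε ≤ b := by nlinarith
  constructor
  · have : b⁻¹ ≤ 1 / s := by
      rw [one_div]
      exact inv_anti₀ hspos hsb
    linarith
  · have hrw2 : (b⁻¹) ^ ((1:ℝ)/2) = (Real.sqrt b)⁻¹ := by
      rw [← Real.sqrt_eq_rpow, Real.sqrt_inv]
    rw [hrw2]
    set c := Real.sqrt b with hc
    have hcpos : 0 < c := Real.sqrt_pos.mpr hbpos
    have hc2 : c ^ 2 = b := Real.sq_sqrt hbpos.le
    set e := Real.sqrt ε with he
    have hepos : 0 < e := Real.sqrt_pos.mpr hε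
    have he2 : e ^ 2 = ε := Real.sq_sqrt hε.le
    have hec : e ≤ c := by
      rw [he, hc]
      exact Real.sqrt_le_sqrt heb
    have key : b - s ≤ e * c := by nlinarith
    have h1 : 1 / s - b⁻¹ = (b - s) / (s * b) := by field_simp
    have h2 : e / s * c⁻¹ = e * c / (s * b) := by
      rw [← hc2]; field_simp
    rw [h1, h2]
    exact div_le_div_of_nonneg_right key (by positivity)
end

section
/- Let N ≥ 1 be an integer, λ > 0, ε ≥ 0, R > 0, and let f : ℝ^N × ℝ^N → [0, ∞) be measurable with ∫∫ (1 + |v|) f(x, v) dx dv < ∞. Define ρ(x) = ∫_{ℝ^N} f(x, v) dv, j(x) = ∫_{ℝ^N} v f(x, v) dv, M = ∫∫ f(x, v) dx dv, and D = ∫∫∫∫ φ_ε(|x − y|) |v − w|² f(x, v) f(y, w) dx dy dv dw ∈ [0, ∞]. Then ∬_{|x − y| < R} |ρ(x) j(y) − j(x) ρ(y)| dx dy ≤ (ε² + c_λ R²)^{λ/2} · D^{1/2} · M, where |ρ(x) j(y) − j(x) ρ(y)| is the Euclidean norm in ℝ^N. -/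
open MeasureTheory Real
open scoped ENNReal

lemma lintegral_prodProdProdComm {α β γ δ : Type*}
    [MeasurableSpace α] [MeasurableSpace β] [MeasurableSpace γ] [MeasurableSpace δ]
    (μa : Measure α) (μb : Measure β) (μc : Measure γ) (μd : Measure δ)
    [SigmaFinite μa] [SigmaFinite μb] [SigmaFinite μc] [SigmaFinite μd]
    (H : (α × γ) × (β × δ) → ℝ≥0∞) (hH : Measurable H) :
    ∫⁻ q : (α × β) × (γ × δ), H ((q.1.1, q.2.1), (q.1.2, q.2.2))
        ∂((μa.prod μb).prod (μc.prod μd))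
      = ∫⁻ r, H r ∂((μa.prod μc).prod (μb.prod μd)) := by
  have m1 : Measurable fun q : (α × β) × (γ × δ) => H ((q.1.1, q.2.1), (q.1.2, q.2.2)) := by
    apply hH.comp
    exact ((measurable_fst.fst.prodMk measurable_snd.fst).prodMk
      (measurable_fst.snd.prodMk measurable_snd.snd))
  rw [lintegral_prod _ m1.aemeasurable, lintegral_prod _ hH.aemeasurable]
  have e1 : ∀ p : α × β, ∫⁻ s : γ × δ, H ((p.1, s.1), (p.2, s.2)) ∂(μc.prod μd)
      = ∫⁻ c, ∫⁻ d, H ((p.1, c), (p.2, d)) ∂μd ∂μc := by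
    intro p
    rw [lintegral_prod]
    exact (hH.comp ((measurable_const.prodMk measurable_fst).prodMk
      (measurable_const.prodMk measurable_snd))).aemeasurable
  have e2 : ∀ p : α × γ, ∫⁻ s : β × δ, H ((p.1, p.2), (s.1, s.2)) ∂(μb.prod μd)
      = ∫⁻ b, ∫⁻ d, H ((p.1, p.2), (b, d)) ∂μd ∂μb := by
    intro p
    rw [lintegral_prod]
    exact (hH.comp (measurable_const.prodMk
      (measurable_fst.prodMk measurable_snd))).aemeasurable
  simp only [e1, e2]
  rw [lintegral_prod, lintegral_prod]
  · congr 1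
    ext a
    exact lintegral_lintegral_swap (by
      apply Measurable.aemeasurable
      apply Measurable.lintegral_prod_right
      apply hH.comp
      exact ((measurable_const.prodMk measurable_fst.snd).prodMk
        (measurable_fst.fst.prodMk measurable_snd)))
  · apply Measurable.aemeasurable
    apply Measurable.lintegral_prod_right
    apply Measurable.lintegral_prod_right
    apply hH.comp
    exact ((measurable_fst.fst.fst.prodMk measurable_fst.fst.snd).prodMk
      (measurable_fst.snd.prodMk measurable_snd))
  · apply Measurable.aemeasurable
    apply Measurable.lintegral_prod_right
    apply Measurable.lintegral_prod_right
    apply hH.comp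
    exact ((measurable_fst.fst.fst.prodMk measurable_fst.snd).prodMk
      (measurable_fst.fst.snd.prodMk measurable_snd))

set_option maxHeartbeats 1600000 in
/-- The non-concentration inequality from the proof of Lemma 3.10: with
`φ_ε(r) = (ε² + c_λ r²)^{-λ}`, `c_λ = 2^{1/λ} − 1`, density `ρ`, current `j`, mass `M`
and alignment dissipation `D` of a nonnegative particle distribution `f`, one has
`∬_{|x−y|<R} |ρ(x) j(y) − j(x) ρ(y)| dx dy ≤ (ε² + c_λ R²)^{λ/2} D^{1/2} M`. -/
theorem stmt_13 (N : ℕ) (hN : 1 ≤ N) (lam : ℝ) (hlam : 0 < lam)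
    (ε : ℝ) (hε : 0 ≤ ε) (R : ℝ) (hR : 0 < R)
    (f : EuclideanSpace ℝ (Fin N) × EuclideanSpace ℝ (Fin N) → ℝ)
    (hf0 : ∀ q, 0 ≤ f q) (hfmeas : Measurable f)
    (hfint : Integrable (fun q : EuclideanSpace ℝ (Fin N) × EuclideanSpace ℝ (Fin N) =>
      (1 + ‖q.2‖) * f q))
    (ρ : EuclideanSpace ℝ (Fin N) → ℝ) (hρ : ∀ x, ρ x = ∫ v, f (x, v))
    (j : EuclideanSpace ℝ (Fin N) → EuclideanSpace ℝ (Fin N))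
    (hj : ∀ x, j x = ∫ v, f (x, v) • v)
    (M : ℝ) (hM : M = ∫ q, f q)
    (D : ℝ≥0∞)
    (hD : D = ∫⁻ q : (EuclideanSpace ℝ (Fin N) × EuclideanSpace ℝ (Fin N)) ×
        (EuclideanSpace ℝ (Fin N) × EuclideanSpace ℝ (Fin N)),
      ENNReal.ofReal ((ε ^ 2 + ((2 : ℝ) ^ (1 / lam) - 1) * ‖q.1.1 - q.2.1‖ ^ 2) ^ (-lam)
        * ‖q.1.2 - q.2.2‖ ^ 2 * (f q.1 * f q.2))) :
    (∫⁻ q : EuclideanSpace ℝ (Fin N) × EuclideanSpace ℝ (Fin N)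
        in {q | ‖q.1 - q.2‖ < R},
      ENNReal.ofReal ‖ρ q.1 • j q.2 - ρ q.2 • j q.1‖)
      ≤ ENNReal.ofReal ((ε ^ 2 + ((2 : ℝ) ^ (1 / lam) - 1) * R ^ 2) ^ (lam / 2))
          * D ^ ((1 : ℝ) / 2) * ENNReal.ofReal M := by
  classical
  haveI : Nonempty (Fin N) := ⟨⟨0, hN⟩⟩
  set c : ℝ := (2 : ℝ) ^ (1 / lam) - 1 with hc_def
  have hc : 0 < c := by
    have h2 : (1 : ℝ) < (2 : ℝ) ^ (1 / lam) := by
      rw [show (1 : ℝ) = (2 : ℝ) ^ (0 : ℝ) by simp]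
      exact Real.rpow_lt_rpow_left_iff one_lt_two |>.mpr (by positivity)
    rw [hc_def]; linarith
  set s : ℝ := ε ^ 2 + c * R ^ 2 with hs_def
  have hs : 0 < s := by
    have : 0 < c * R ^ 2 := by positivity
    have := sq_nonneg ε; simp only [hs_def]; nlinarith
  set F : EuclideanSpace ℝ (Fin N) × EuclideanSpace ℝ (Fin N) → ℝ≥0∞ :=
    fun p => ENNReal.ofReal (f p) with hF_def
  have hF : Measurable F := ENNReal.measurable_ofReal.comp hfmeas
  set φ : (EuclideanSpace ℝ (Fin N) × EuclideanSpace ℝ (Fin N)) ×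
      (EuclideanSpace ℝ (Fin N) × EuclideanSpace ℝ (Fin N)) → ℝ :=
    fun q => ε ^ 2 + c * ‖q.1.1 - q.2.1‖ ^ 2 with hφ_def
  have hφm : Measurable φ := by
    apply Measurable.add measurable_const
    exact (measurable_const.mul (((measurable_fst.fst.sub measurable_snd.fst).norm).pow
      measurable_const))
  have hφ0 : ∀ q, 0 ≤ φ q := fun q => by positivity
  set S : Set ((EuclideanSpace ℝ (Fin N) × EuclideanSpace ℝ (Fin N)) ×
      (EuclideanSpace ℝ (Fin N) × EuclideanSpace ℝ (Fin N))) :=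
    {q | ‖q.1.1 - q.2.1‖ < R} with hS_def
  have hSm : MeasurableSet S :=
    measurableSet_lt ((measurable_fst.fst.sub measurable_snd.fst).norm) measurable_const
  set A : (EuclideanSpace ℝ (Fin N) × EuclideanSpace ℝ (Fin N)) ×
      (EuclideanSpace ℝ (Fin N) × EuclideanSpace ℝ (Fin N)) → ℝ≥0∞ :=
    fun q => ENNReal.ofReal (φ q ^ (-(lam / 2)) * ‖q.1.2 - q.2.2‖)
      * (F q.1 * F q.2) ^ ((1 : ℝ) / 2) with hA_def
  set B : (EuclideanSpace ℝ (Fin N) × EuclideanSpace ℝ (Fin N)) ×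
      (EuclideanSpace ℝ (Fin N) × EuclideanSpace ℝ (Fin N)) → ℝ≥0∞ :=
    fun q => S.indicator (fun q => ENNReal.ofReal (φ q ^ (lam / 2))) q
      * (F q.1 * F q.2) ^ ((1 : ℝ) / 2) with hB_def
  have hX : Measurable fun q : (EuclideanSpace ℝ (Fin N) × EuclideanSpace ℝ (Fin N)) ×
      (EuclideanSpace ℝ (Fin N) × EuclideanSpace ℝ (Fin N)) =>
      (F q.1 * F q.2) ^ ((1 : ℝ) / 2) :=
    ((hF.comp measurable_fst).mul (hF.comp measurable_snd)).pow measurable_const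
  have hAmeas : Measurable A := by
    apply Measurable.mul ?_ hX
    exact ENNReal.measurable_ofReal.comp ((hφm.pow measurable_const).mul
      ((measurable_fst.snd.sub measurable_snd.snd).norm))
  have hBmeas : Measurable B := by
    apply Measurable.mul ?_ hX
    exact (ENNReal.measurable_ofReal.comp (hφm.pow measurable_const)).indicator hSm
  haveI : NullSingletonClass (volume : Measure (EuclideanSpace ℝ (Fin N))) := inferInstance
  -- the augmented diagonal in position space is null
  set Z : Set ((EuclideanSpace ℝ (Fin N) × EuclideanSpace ℝ (Fin N)) ×
      (EuclideanSpace ℝ (Fin N) × EuclideanSpace ℝ (Fin N))) :=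
    {q | q.1.1 = q.2.1} with hZ_def
  have hZm : MeasurableSet Z :=
    measurableSet_eq_fun measurable_fst.fst measurable_snd.fst
  have hZnull : volume Z = 0 := by
    rw [show (volume : Measure ((EuclideanSpace ℝ (Fin N) × EuclideanSpace ℝ (Fin N)) ×
      (EuclideanSpace ℝ (Fin N) × EuclideanSpace ℝ (Fin N)))) = Measure.prod volume volume from
      rfl, Measure.prod_apply hZm]
    have : ∀ p : EuclideanSpace ℝ (Fin N) × EuclideanSpace ℝ (Fin N),
        (volume (Prod.mk p ⁻¹' Z) : ℝ≥0∞) = 0 := by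
      intro p
      have hpre : Prod.mk p ⁻¹' Z = {p.1} ×ˢ (Set.univ : Set (EuclideanSpace ℝ (Fin N))) := by
        ext r
        simp only [hZ_def, Set.mem_setOf_eq, Set.mem_prod, Set.mem_singleton_iff,
          Set.mem_univ, and_true]
        exact eq_comm
      rw [hpre, show (volume : Measure (EuclideanSpace ℝ (Fin N) × EuclideanSpace ℝ (Fin N)))
        = Measure.prod volume volume from rfl, Measure.prod_prod, measure_singleton, zero_mul]
    simp only [this, lintegral_zero]
  set T : Set (EuclideanSpace ℝ (Fin N) × EuclideanSpace ℝ (Fin N)) := {p | ‖p.1 - p.2‖ < R} with hT_def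
  have hTm : MeasurableSet T :=
    measurableSet_lt ((measurable_fst.sub measurable_snd).norm) measurable_const
  have hGood : ∀ᵐ x ∂(volume : Measure (EuclideanSpace ℝ (Fin N))),
      Integrable (fun v => (1 + ‖v‖) * f (x, v)) := hfint.prod_right_ae
  have int1 : ∀ x : EuclideanSpace ℝ (Fin N), Integrable (fun v => (1 + ‖v‖) * f (x, v)) →
      Integrable (fun v => f (x, v)) := by
    intro x hx
    refine hx.mono ((hfmeas.comp measurable_prodMk_left).aestronglyMeasurable)
      (Filter.Eventually.of_forall fun v => ?_)
    have h1 := hf0 (x, v); have h2 := norm_nonneg v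
    rw [Real.norm_eq_abs, Real.norm_eq_abs, abs_of_nonneg h1, abs_of_nonneg (by nlinarith)]
    nlinarith
  have int2 : ∀ x : EuclideanSpace ℝ (Fin N), Integrable (fun v => (1 + ‖v‖) * f (x, v)) →
      Integrable (fun v => f (x, v) • v) := by
    intro x hx
    refine hx.mono (((hfmeas.comp measurable_prodMk_left).aestronglyMeasurable).smul
      aestronglyMeasurable_id) (Filter.Eventually.of_forall fun v => ?_)
    have h1 := hf0 (x, v); have h2 := norm_nonneg v
    rw [norm_smul, Real.norm_eq_abs, Real.norm_eq_abs, abs_of_nonneg h1,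
      abs_of_nonneg (by nlinarith)]
    nlinarith
  have pt : ∀ x y : EuclideanSpace ℝ (Fin N), Integrable (fun v => (1 + ‖v‖) * f (x, v)) →
      Integrable (fun w => (1 + ‖w‖) * f (y, w)) →
      ENNReal.ofReal ‖ρ x • j y - ρ y • j x‖
        ≤ ∫⁻ v, ∫⁻ w, F (x, v) * F (y, w) * ENNReal.ofReal ‖v - w‖ := by
    intro x y hx hy
    have hfx := int1 x hx; have hfxv := int2 x hx
    have hfy := int1 y hy; have hfyw := int2 y hy
    have hid2 : ∀ v, j y - ρ y • v = ∫ w, f (y, w) • (w - v) := by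
      intro v
      have e : (fun w => f (y, w) • (w - v)) = fun w => f (y, w) • w - f (y, w) • v :=
        funext fun w => smul_sub _ _ _
      rw [e, integral_sub hfyw (hfy.smul_const v), integral_smul_const, hρ y, hj y]
    have hid : ρ x • j y - ρ y • j x = ∫ v, f (x, v) • (j y - ρ y • v) := by
      have e : (fun v => f (x, v) • (j y - ρ y • v))
          = fun v => f (x, v) • j y - ρ y • (f (x, v) • v) := by
        funext v; rw [smul_sub, smul_comm]
      have hsm : Integrable (fun v => ρ y • (f (x, v) • v)) volume := hfxv.smul (ρ y)
      rw [e, integral_sub (hfx.smul_const _) hsm, integral_smul_const,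
        integral_smul, hρ x, hj x]
    calc ENNReal.ofReal ‖ρ x • j y - ρ y • j x‖
        = ↑‖∫ v, f (x, v) • (j y - ρ y • v)‖₊ := by rw [hid, ofReal_norm, enorm_eq_nnnorm]
      _ ≤ ∫⁻ v, ↑‖f (x, v) • (j y - ρ y • v)‖₊ := enorm_integral_le_lintegral_enorm _
      _ ≤ ∫⁻ v, ∫⁻ w, F (x, v) * F (y, w) * ENNReal.ofReal ‖v - w‖ := ?_
    refine lintegral_mono fun v => ?_
    have e1 : (‖f (x, v) • (j y - ρ y • v)‖₊ : ℝ≥0∞)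
        = F (x, v) * ENNReal.ofReal ‖j y - ρ y • v‖ := by
      rw [← enorm_eq_nnnorm, ← ofReal_norm, norm_smul, Real.norm_eq_abs, abs_of_nonneg (hf0 _),
        ENNReal.ofReal_mul (hf0 _)]
    have e2 : ENNReal.ofReal ‖j y - ρ y • v‖ ≤ ∫⁻ w, F (y, w) * ENNReal.ofReal ‖v - w‖ := by
      rw [hid2 v, ofReal_norm]
      refine le_trans (enorm_integral_le_lintegral_enorm _) (lintegral_mono fun w => ?_)
      rw [← ofReal_norm, norm_smul, Real.norm_eq_abs, abs_of_nonneg (hf0 _),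
        ENNReal.ofReal_mul (hf0 _), norm_sub_rev]
    rw [e1]
    calc F (x, v) * ENNReal.ofReal ‖j y - ρ y • v‖
        ≤ F (x, v) * ∫⁻ w, F (y, w) * ENNReal.ofReal ‖v - w‖ := mul_le_mul_right e2 _
      _ = ∫⁻ w, F (x, v) * (F (y, w) * ENNReal.ofReal ‖v - w‖) :=
          (lintegral_const_mul _ ((hF.comp measurable_prodMk_left).mul
            ((measurable_const.sub measurable_id).norm.ennreal_ofReal))).symm
      _ = ∫⁻ w, F (x, v) * F (y, w) * ENNReal.ofReal ‖v - w‖ := by simp [mul_assoc]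
  have aeGood : ∀ᵐ p : EuclideanSpace ℝ (Fin N) × EuclideanSpace ℝ (Fin N) ∂volume,
      Integrable (fun v => (1 + ‖v‖) * f (p.1, v))
        ∧ Integrable (fun w => (1 + ‖w‖) * f (p.2, w)) := by
    have h1 : ∀ᵐ p : EuclideanSpace ℝ (Fin N) × EuclideanSpace ℝ (Fin N) ∂volume, Integrable (fun v => (1 + ‖v‖) * f (p.1, v)) :=
      MeasureTheory.Measure.quasiMeasurePreserving_fst.ae hGood
    have h2 : ∀ᵐ p : EuclideanSpace ℝ (Fin N) × EuclideanSpace ℝ (Fin N) ∂volume, Integrable (fun w => (1 + ‖w‖) * f (p.2, w)) :=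
      MeasureTheory.Measure.quasiMeasurePreserving_snd.ae hGood
    exact h1.and h2
  have step1a : (∫⁻ p : EuclideanSpace ℝ (Fin N) × EuclideanSpace ℝ (Fin N) in T, ENNReal.ofReal ‖ρ p.1 • j p.2 - ρ p.2 • j p.1‖)
      ≤ ∫⁻ p : EuclideanSpace ℝ (Fin N) × EuclideanSpace ℝ (Fin N) in T, ∫⁻ v, ∫⁻ w, F (p.1, v) * F (p.2, w) * ENNReal.ofReal ‖v - w‖ :=
    lintegral_mono_ae (ae_restrict_of_ae (aeGood.mono fun p hp => pt p.1 p.2 hp.1 hp.2))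
  set H : ((EuclideanSpace ℝ (Fin N) × EuclideanSpace ℝ (Fin N)) × (EuclideanSpace ℝ (Fin N) × EuclideanSpace ℝ (Fin N))) → ℝ≥0∞ :=
    fun r => Set.indicator {r : (EuclideanSpace ℝ (Fin N) × EuclideanSpace ℝ (Fin N)) × (EuclideanSpace ℝ (Fin N) × EuclideanSpace ℝ (Fin N)) | ‖r.1.1 - r.1.2‖ < R}
      (fun r => F (r.1.1, r.2.1) * F (r.1.2, r.2.2) * ENNReal.ofReal ‖r.2.1 - r.2.2‖) r
      with hH_def
  have hHm : Measurable H := by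
    refine Measurable.indicator ?_
      (measurableSet_lt ((measurable_fst.fst.sub measurable_fst.snd).norm) measurable_const)
    exact ((hF.comp (measurable_fst.fst.prodMk measurable_snd.fst)).mul
      (hF.comp (measurable_fst.snd.prodMk measurable_snd.snd))).mul
      ((measurable_snd.fst.sub measurable_snd.snd).norm.ennreal_ofReal)
  have step1b : (∫⁻ p : EuclideanSpace ℝ (Fin N) × EuclideanSpace ℝ (Fin N) in T, ∫⁻ v, ∫⁻ w, F (p.1, v) * F (p.2, w)
        * ENNReal.ofReal ‖v - w‖)
      = ∫⁻ q : (EuclideanSpace ℝ (Fin N) × EuclideanSpace ℝ (Fin N)) × (EuclideanSpace ℝ (Fin N) × EuclideanSpace ℝ (Fin N)),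
          S.indicator (fun q => F q.1 * F q.2 * ENNReal.ofReal ‖q.1.2 - q.2.2‖) q := by
    have inner_eq : ∀ p : EuclideanSpace ℝ (Fin N) × EuclideanSpace ℝ (Fin N),
        (∫⁻ v, ∫⁻ w, F (p.1, v) * F (p.2, w) * ENNReal.ofReal ‖v - w‖)
          = ∫⁻ sv : EuclideanSpace ℝ (Fin N) × EuclideanSpace ℝ (Fin N), F (p.1, sv.1) * F (p.2, sv.2) * ENNReal.ofReal ‖sv.1 - sv.2‖ := by
      intro p
      rw [show (volume : Measure (EuclideanSpace ℝ (Fin N) × EuclideanSpace ℝ (Fin N))) = Measure.prod volume volume from rfl,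
        lintegral_prod]
      exact (((hF.comp (measurable_const.prodMk measurable_fst)).mul
        (hF.comp (measurable_const.prodMk measurable_snd))).mul
        ((measurable_fst.sub measurable_snd).norm.ennreal_ofReal)).aemeasurable
    calc (∫⁻ p : EuclideanSpace ℝ (Fin N) × EuclideanSpace ℝ (Fin N) in T, ∫⁻ v, ∫⁻ w, F (p.1, v) * F (p.2, w) * ENNReal.ofReal ‖v - w‖)
        = ∫⁻ p : EuclideanSpace ℝ (Fin N) × EuclideanSpace ℝ (Fin N) in T, ∫⁻ sv : EuclideanSpace ℝ (Fin N) × EuclideanSpace ℝ (Fin N),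
            F (p.1, sv.1) * F (p.2, sv.2) * ENNReal.ofReal ‖sv.1 - sv.2‖ := by
          simp only [inner_eq]
      _ = ∫⁻ p : EuclideanSpace ℝ (Fin N) × EuclideanSpace ℝ (Fin N), T.indicator (fun p => ∫⁻ sv : EuclideanSpace ℝ (Fin N) × EuclideanSpace ℝ (Fin N),
            F (p.1, sv.1) * F (p.2, sv.2) * ENNReal.ofReal ‖sv.1 - sv.2‖) p :=
          (lintegral_indicator hTm _).symm
      _ = ∫⁻ p : EuclideanSpace ℝ (Fin N) × EuclideanSpace ℝ (Fin N), ∫⁻ sv : EuclideanSpace ℝ (Fin N) × EuclideanSpace ℝ (Fin N), H (p, sv) := by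
          refine lintegral_congr fun p => ?_
          by_cases hp : p ∈ T
          · rw [Set.indicator_of_mem hp]
            refine lintegral_congr fun sv => ?_
            rw [hH_def]
            have hmem : (p, sv) ∈ {r : (EuclideanSpace ℝ (Fin N) × EuclideanSpace ℝ (Fin N)) × (EuclideanSpace ℝ (Fin N) × EuclideanSpace ℝ (Fin N)) | ‖r.1.1 - r.1.2‖ < R} := hp
            simp only [Set.indicator_of_mem hmem]
          · rw [Set.indicator_of_notMem hp]
            have hz : ∀ sv : EuclideanSpace ℝ (Fin N) × EuclideanSpace ℝ (Fin N), H (p, sv) = 0 := fun sv => by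
              rw [hH_def]
              have hmem : (p, sv) ∉ {r : (EuclideanSpace ℝ (Fin N) × EuclideanSpace ℝ (Fin N)) × (EuclideanSpace ℝ (Fin N) × EuclideanSpace ℝ (Fin N)) | ‖r.1.1 - r.1.2‖ < R} := hp
              simp only [Set.indicator_of_notMem hmem]
            simp [hz]
      _ = ∫⁻ r : (EuclideanSpace ℝ (Fin N) × EuclideanSpace ℝ (Fin N)) × (EuclideanSpace ℝ (Fin N) × EuclideanSpace ℝ (Fin N)), H r := by
          rw [show (volume : Measure ((EuclideanSpace ℝ (Fin N) × EuclideanSpace ℝ (Fin N)) × (EuclideanSpace ℝ (Fin N) × EuclideanSpace ℝ (Fin N))))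
            = Measure.prod volume volume from rfl, lintegral_prod _ hHm.aemeasurable]
      _ = ∫⁻ q : (EuclideanSpace ℝ (Fin N) × EuclideanSpace ℝ (Fin N)) × (EuclideanSpace ℝ (Fin N) × EuclideanSpace ℝ (Fin N)), H ((q.1.1, q.2.1), (q.1.2, q.2.2)) :=
          (lintegral_prodProdProdComm volume volume volume volume H hHm).symm
      _ = ∫⁻ q : (EuclideanSpace ℝ (Fin N) × EuclideanSpace ℝ (Fin N)) × (EuclideanSpace ℝ (Fin N) × EuclideanSpace ℝ (Fin N)),
            S.indicator (fun q => F q.1 * F q.2 * ENNReal.ofReal ‖q.1.2 - q.2.2‖) q := by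
          refine lintegral_congr fun q => ?_
          rw [hH_def]
          by_cases hq : q ∈ S
          · have hmem : ((q.1.1, q.2.1), (q.1.2, q.2.2)) ∈ {r : (EuclideanSpace ℝ (Fin N) × EuclideanSpace ℝ (Fin N)) × (EuclideanSpace ℝ (Fin N) × EuclideanSpace ℝ (Fin N)) | ‖r.1.1 - r.1.2‖ < R} := hq
            simp only [Set.indicator_of_mem hmem, Set.indicator_of_mem hq]
          · have hmem : ((q.1.1, q.2.1), (q.1.2, q.2.2)) ∉ {r : (EuclideanSpace ℝ (Fin N) × EuclideanSpace ℝ (Fin N)) × (EuclideanSpace ℝ (Fin N) × EuclideanSpace ℝ (Fin N)) | ‖r.1.1 - r.1.2‖ < R} := hq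
            simp only [Set.indicator_of_notMem hmem, Set.indicator_of_notMem hq]
  
  have hZc : ∀ᵐ q : ((EuclideanSpace ℝ (Fin N)) × (EuclideanSpace ℝ (Fin N))) × ((EuclideanSpace ℝ (Fin N)) × (EuclideanSpace ℝ (Fin N))) ∂volume, q ∉ Z := by
    rw [ae_iff]
    simpa [not_not] using hZnull
  have step2 : (∫⁻ q : ((EuclideanSpace ℝ (Fin N)) × (EuclideanSpace ℝ (Fin N))) × ((EuclideanSpace ℝ (Fin N)) × (EuclideanSpace ℝ (Fin N))),
        S.indicator (fun q => F q.1 * F q.2 * ENNReal.ofReal ‖q.1.2 - q.2.2‖) q)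
      ≤ ∫⁻ q, A q * B q := by
    refine lintegral_mono_ae (hZc.mono fun q hq => ?_)
    by_cases hqS : q ∈ S
    · have hφpos : 0 < φ q := by
        have hne : q.1.1 ≠ q.2.1 := hq
        have h0 : 0 < ‖q.1.1 - q.2.1‖ := norm_pos_iff.mpr (sub_ne_zero.mpr hne)
        have h1 : 0 < c * ‖q.1.1 - q.2.1‖ ^ 2 := by positivity
        have h2 := sq_nonneg ε
        simp only [hφ_def]; nlinarith
      rw [Set.indicator_of_mem hqS]
      have hXX : ((F q.1 * F q.2) ^ ((1:ℝ)/2)) * ((F q.1 * F q.2) ^ ((1:ℝ)/2))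
          = F q.1 * F q.2 := by
        rw [← ENNReal.rpow_add_of_nonneg ((1:ℝ)/2) ((1:ℝ)/2) (by norm_num) (by norm_num)]
        norm_num
      have hone : φ q ^ (-(lam/2)) * φ q ^ (lam/2) = 1 := by
        rw [← Real.rpow_add hφpos]; norm_num
      have key : ENNReal.ofReal (φ q ^ (-(lam/2)) * ‖q.1.2 - q.2.2‖)
          * ENNReal.ofReal (φ q ^ (lam/2)) = ENNReal.ofReal ‖q.1.2 - q.2.2‖ := by
        rw [← ENNReal.ofReal_mul (by positivity)]
        congr 1
        rw [show φ q ^ (-(lam/2)) * ‖q.1.2 - q.2.2‖ * φ q ^ (lam/2)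
          = (φ q ^ (-(lam/2)) * φ q ^ (lam/2)) * ‖q.1.2 - q.2.2‖ from by ring, hone, one_mul]
      have hAB : A q * B q = ENNReal.ofReal ‖q.1.2 - q.2.2‖ * (F q.1 * F q.2) := by
        simp only [hA_def, hB_def, Set.indicator_of_mem hqS]
        rw [mul_mul_mul_comm, key, hXX]
      rw [hAB]
      exact le_of_eq (by ring)
    · rw [Set.indicator_of_notMem hqS]
      exact zero_le
  have hconj : Real.HolderConjugate 2 2 := Real.holderConjugate_iff.mpr ⟨one_lt_two, by norm_num⟩
  have CS : (∫⁻ q, A q * B q)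
      ≤ (∫⁻ q, A q ^ (2:ℝ)) ^ ((1:ℝ)/2) * (∫⁻ q, B q ^ (2:ℝ)) ^ ((1:ℝ)/2) := by
    have h := ENNReal.lintegral_mul_le_Lp_mul_Lq volume hconj
      hAmeas.aemeasurable hBmeas.aemeasurable
    simpa using h
  have hA2 : (∫⁻ q, A q ^ (2:ℝ)) = D := by
    rw [hD]
    refine lintegral_congr fun q => ?_
    have er : (φ q ^ (-(lam/2)) * ‖q.1.2 - q.2.2‖) ^ (2:ℝ)
        = φ q ^ (-lam) * ‖q.1.2 - q.2.2‖ ^ 2 := by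
      rw [Real.mul_rpow (by positivity) (norm_nonneg _), ← Real.rpow_mul (hφ0 q),
        ← Real.rpow_natCast ‖q.1.2 - q.2.2‖ 2]
      norm_num
    simp only [hA_def]
    rw [ENNReal.mul_rpow_of_nonneg _ _ (by norm_num : (0:ℝ) ≤ 2),
      ENNReal.ofReal_rpow_of_nonneg (by positivity) (by norm_num : (0:ℝ) ≤ 2),
      ← ENNReal.rpow_mul, er]
    norm_num
    rw [hF_def]
    simp only
    rw [← ENNReal.ofReal_mul (hf0 q.1), ← ENNReal.ofReal_mul (by positivity)]
  have hB2 : (∫⁻ q, B q ^ (2:ℝ))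
      ≤ ENNReal.ofReal (s ^ lam) * (ENNReal.ofReal M * ENNReal.ofReal M) := by
    have pw : ∀ q : ((EuclideanSpace ℝ (Fin N)) × (EuclideanSpace ℝ (Fin N))) × ((EuclideanSpace ℝ (Fin N)) × (EuclideanSpace ℝ (Fin N))),
        B q ^ (2:ℝ) ≤ ENNReal.ofReal (s ^ lam) * (F q.1 * F q.2) := by
      intro q
      simp only [hB_def]
      rw [ENNReal.mul_rpow_of_nonneg _ _ (by norm_num : (0:ℝ) ≤ 2), ← ENNReal.rpow_mul]
      norm_num
      refine mul_le_mul_left ?_ _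
      by_cases hqS : q ∈ S
      · rw [Set.indicator_of_mem hqS,
          ← ENNReal.ofReal_pow (by positivity : (0:ℝ) ≤ φ q ^ (lam/2))]
        apply ENNReal.ofReal_le_ofReal
        have hpw : (φ q ^ (lam/2)) ^ (2:ℕ) = φ q ^ lam := by
          rw [← Real.rpow_natCast (φ q ^ (lam/2)) 2, ← Real.rpow_mul (hφ0 q)]
          norm_num
        rw [hpw]
        refine Real.rpow_le_rpow (hφ0 q) ?_ hlam.le
        have hle : ‖q.1.1 - q.2.1‖ ≤ R := le_of_lt hqS
        have hn := norm_nonneg (q.1.1 - q.2.1)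
        simp only [hφ_def, hs_def]
        nlinarith [mul_le_mul_of_nonneg_left (pow_le_pow_left₀ hn hle 2) hc.le]
      · rw [Set.indicator_of_notMem hqS]
        simp
    calc (∫⁻ q, B q ^ (2:ℝ))
        ≤ ∫⁻ q : ((EuclideanSpace ℝ (Fin N)) × (EuclideanSpace ℝ (Fin N))) × ((EuclideanSpace ℝ (Fin N)) × (EuclideanSpace ℝ (Fin N))), ENNReal.ofReal (s ^ lam) * (F q.1 * F q.2) :=
          lintegral_mono pw
      _ = ENNReal.ofReal (s ^ lam) * ∫⁻ q : ((EuclideanSpace ℝ (Fin N)) × (EuclideanSpace ℝ (Fin N))) × ((EuclideanSpace ℝ (Fin N)) × (EuclideanSpace ℝ (Fin N))), F q.1 * F q.2 :=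
          lintegral_const_mul _ ((hF.comp measurable_fst).mul (hF.comp measurable_snd))
      _ = ENNReal.ofReal (s ^ lam) * (ENNReal.ofReal M * ENNReal.ofReal M) := by
          rw [show (volume : Measure (((EuclideanSpace ℝ (Fin N)) × (EuclideanSpace ℝ (Fin N))) × ((EuclideanSpace ℝ (Fin N)) × (EuclideanSpace ℝ (Fin N)))))
            = Measure.prod volume volume from rfl,
            lintegral_prod_mul hF.aemeasurable hF.aemeasurable]
          have hfi : Integrable f volume := by
            refine hfint.mono (hfmeas.aestronglyMeasurable)
              (Filter.Eventually.of_forall fun q => ?_)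
            have h1 := hf0 q; have h2 := norm_nonneg q.2
            rw [Real.norm_eq_abs, Real.norm_eq_abs, abs_of_nonneg h1,
              abs_of_nonneg (by nlinarith)]
            nlinarith
          have hMF : ENNReal.ofReal M = ∫⁻ p, F p := by
            rw [hM, ofReal_integral_eq_lintegral_ofReal hfi
              (Filter.Eventually.of_forall hf0), hF_def]
          rw [hMF]
  refine le_trans (le_trans step1a (le_of_eq step1b)) (le_trans step2 (le_trans CS ?_))
  rw [hA2]
  calc D ^ ((1:ℝ)/2) * (∫⁻ q, B q ^ (2:ℝ)) ^ ((1:ℝ)/2)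
      ≤ D ^ ((1:ℝ)/2)
          * (ENNReal.ofReal (s ^ lam) * (ENNReal.ofReal M * ENNReal.ofReal M)) ^ ((1:ℝ)/2) :=
        mul_le_mul_right (ENNReal.rpow_le_rpow hB2 (by norm_num)) _
    _ = ENNReal.ofReal (s ^ (lam/2)) * D ^ ((1:ℝ)/2) * ENNReal.ofReal M := by
        rw [ENNReal.mul_rpow_of_nonneg _ _ (by norm_num : (0:ℝ) ≤ 1/2),
          ENNReal.ofReal_rpow_of_pos (by positivity), ← Real.rpow_mul hs.le]
        have hMM : (ENNReal.ofReal M * ENNReal.ofReal M) ^ ((1:ℝ)/2) = ENNReal.ofReal M := by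
          rw [ENNReal.mul_rpow_of_nonneg _ _ (by norm_num : (0:ℝ) ≤ 1/2),
            ← ENNReal.rpow_add_of_nonneg _ _ (by norm_num) (by norm_num)]
          norm_num
        rw [hMM, show lam * (1/2) = lam/2 from by ring]
        ring
end
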